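/- Let β > β_c, where β_c is the unique solution of Γ_β = 1 with Γ_β := (1+e^{-β/2})/((1-e^{-β/2})e^β). Then the excess free energy f̃(β) := f(β) - β equals 0, i.e. the free energy satisfies f(β) = β for all β ≥ β_c. -/

import Mathlib

open Filter Topology

open Filter Topology

lemma sumIcc (q : ℝ) : ∀ M : ℕ, ∑ x ∈ Finset.Icc (-(M:ℤ)) M, q ^ x.natAbs
    = 1 + 2 * ∑ i ∈ Finset.range M, q^(i+1) := by
  intro M
  induction M with
  | zero => simp
  | succ M ih =>
    have hset : Finset.Icc (-(M+1:ℤ)) (M+1) =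
        insert (-(M+1:ℤ)) (insert ((M+1:ℤ)) (Finset.Icc (-(M:ℤ)) M)) := by
      ext x; simp only [Finset.mem_Icc, Finset.mem_insert]; omega
    have h1 : (-(M+1:ℤ)) ∉ insert ((M+1:ℤ)) (Finset.Icc (-(M:ℤ)) M) := by
      simp only [Finset.mem_insert, Finset.mem_Icc]; omega
    have h2 : ((M+1:ℤ)) ∉ Finset.Icc (-(M:ℤ)) M := by
      simp only [Finset.mem_Icc]; omega
    push_cast
    rw [hset, Finset.sum_insert h1, Finset.sum_insert h2, ih, Finset.sum_range_succ]
    have e1 : (-(M+1:ℤ)).natAbs = M+1 := by omega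
    have e2 : ((M+1:ℤ)).natAbs = M+1 := by omega
    rw [e1, e2]; push_cast; ring

lemma lemB (q : ℝ) (hq0 : 0 ≤ q) (hq1 : q < 1) (A : Finset ℤ) :
    ∑ x ∈ A, q ^ x.natAbs ≤ (1+q)/(1-q) := by
  set M := A.sup Int.natAbs with hM
  have hsub : A ⊆ Finset.Icc (-(M:ℤ)) M := by
    intro x hx
    have : x.natAbs ≤ M := Finset.le_sup hx
    simp only [Finset.mem_Icc]; omega
  have h1 : ∑ x ∈ A, q ^ x.natAbs ≤ ∑ x ∈ Finset.Icc (-(M:ℤ)) M, q ^ x.natAbs :=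
    Finset.sum_le_sum_of_subset_of_nonneg hsub (fun x _ _ => pow_nonneg hq0 _)
  rw [sumIcc q M] at h1
  refine h1.trans ?_
  have hgeom : (∑ i ∈ Finset.range M, q^i) * (q-1) = q^M - 1 := geom_sum_mul q M
  have hsum : ∑ i ∈ Finset.range M, q^(i+1) = q * ∑ i ∈ Finset.range M, q^i := by
    rw [Finset.mul_sum]; exact Finset.sum_congr rfl fun i _ => by ring
  rw [hsum, le_div_iff₀ (by linarith)]
  have hqM : 0 ≤ q^M := pow_nonneg hq0 M
  nlinarith [Finset.sum_nonneg (fun i (_ : i ∈ Finset.range M) => pow_nonneg hq0 i)]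

lemma lemC (q : ℝ) (hq0 : 0 ≤ q) (hq1 : q < 1) (m : ℕ) (t : Finset (Fin m → ℤ)) :
    ∑ u ∈ t, ∏ j, q ^ (u j).natAbs ≤ ((1+q)/(1-q))^m := by
  have hsub : t ⊆ Fintype.piFinset (fun j => t.image (fun u => u j)) := by
    intro u hu
    rw [Fintype.mem_piFinset]
    exact fun j => Finset.mem_image_of_mem _ hu
  have h1 : ∑ u ∈ t, ∏ j, q ^ (u j).natAbs
      ≤ ∑ u ∈ Fintype.piFinset (fun j => t.image (fun u => u j)), ∏ j, q ^ (u j).natAbs :=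
    Finset.sum_le_sum_of_subset_of_nonneg hsub
      (fun u _ _ => Finset.prod_nonneg fun j _ => pow_nonneg hq0 _)
  refine h1.trans ?_
  rw [← Finset.prod_univ_sum (fun j => t.image (fun u => u j)) (fun _ x => q ^ x.natAbs)]
  calc ∏ j : Fin m, ∑ x ∈ t.image (fun u => u j), q ^ x.natAbs
      ≤ ∏ _j : Fin m, (1+q)/(1-q) := by
        refine Finset.prod_le_prod (fun j _ => Finset.sum_nonneg fun x _ => pow_nonneg hq0 _)
          (fun j _ => lemB q hq0 hq1 _)
    _ = ((1+q)/(1-q))^m := by simp; rw [div_pow]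

lemma lemA (a b : ℝ) (ha : 0 < a) (hab : a ≤ b)
    (h1 : (1 + Real.exp (-a/2)) / ((1 - Real.exp (-a/2)) * Real.exp a) = 1) :
    1 + Real.exp (-b/2) ≤ (1 - Real.exp (-b/2)) * Real.exp b := by
  set x := Real.exp (a/2) with hx
  set y := Real.exp (b/2) with hy
  have hx1 : 1 < x := by
    rw [hx, show (1:ℝ) = Real.exp 0 from (Real.exp_zero).symm]
    exact Real.exp_lt_exp.mpr (by linarith)
  have hxy : x ≤ y := Real.exp_le_exp.mpr (by linarith)
  have hea : Real.exp a = x^2 := by rw [hx, ← Real.exp_nat_mul]; norm_num; ring_nf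
  have heb : Real.exp b = y^2 := by rw [hy, ← Real.exp_nat_mul]; norm_num; ring_nf
  have hena : Real.exp (-a/2) = 1/x := by
    rw [hx, one_div, ← Real.exp_neg]; ring_nf
  have henb : Real.exp (-b/2) = 1/y := by
    rw [hy, one_div, ← Real.exp_neg]; ring_nf
  rw [hena, hea] at h1
  rw [henb, heb]
  have hx0 : (0:ℝ) < x := by linarith
  have hy0 : (0:ℝ) < y := by linarith
  have hden : (1 - 1/x) * x^2 ≠ 0 := by
    have : 0 < 1 - 1/x := by
      rw [sub_pos, div_lt_one (by linarith)]; exact hx1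
    positivity
  have h1' : 1 + 1/x = (1 - 1/x) * x^2 := (div_eq_one_iff_eq hden).mp h1
  have hcx : x^3 - x^2 - x - 1 = 0 := by
    field_simp at h1'; nlinarith [h1']
  have hcy : 0 ≤ y^3 - y^2 - y - 1 := by
    nlinarith [sq_nonneg (y - x), sq_nonneg (y + x), mul_pos hx0 hy0]
  have hinv : y * (1/y) = 1 := by field_simp
  nlinarith [hcy, hinv, hy0]

/-- extension of `l` to ℕ by zero -/
def aa (N : ℕ) (l : Fin N → ℤ) (i : ℕ) : ℤ := if h : i < N then l ⟨i,h⟩ else 0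

def bb (n : ℕ) (l : Fin (n+1) → ℤ) (j : ℕ) : ℤ :=
  if j = 0 then aa (n+1) l 0 else if j = n+1 then aa (n+1) l n
  else aa (n+1) l (j-1) + aa (n+1) l j

def phi (n : ℕ) (l : Fin (n+1) → ℤ) : Fin (n+2) → ℤ := fun j => bb n l (j : ℕ)

lemma phi_inj (n : ℕ) : Function.Injective (phi n) := by
  intro l l' h
  have hb : ∀ j : ℕ, j < n+2 → bb n l j = bb n l' j := fun j hj => congrFun h ⟨j, hj⟩
  have key : ∀ i : ℕ, aa (n+1) l i = aa (n+1) l' i := by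
    intro i
    induction i with
    | zero =>
      have := hb 0 (by omega)
      simpa [bb] using this
    | succ i ih =>
      by_cases hle : i + 1 < n + 1
      · have := hb (i+1) (by omega)
        simp only [bb, if_neg (by omega : ¬ i+1=0), if_neg (by omega : ¬ i+1=n+1),
          Nat.add_sub_cancel] at this
        omega
      · simp [aa, hle]
  funext i
  have := key (i : ℕ)
  simpa [aa, i.isLt] using this

lemma lemE (n : ℕ) (l : Fin (n+1) → ℤ) :
    2 * (∑ i : Fin (n+1), if h : (i : ℕ) + 1 < n+1 then
          (if l i * l ⟨(i : ℕ) + 1, h⟩ < 0 then min |l i| |l ⟨(i : ℕ) + 1, h⟩| else 0)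
          else 0)
      = 2 * (∑ i : Fin (n+1), |l i|) - ∑ j : Fin (n+2), |phi n l j| := by
  set a := aa (n+1) l with ha
  have hal : ∀ i : Fin (n+1), a (i : ℕ) = l i := by
    intro i; rw [ha]; simp [aa, i.isLt]
  -- S1
  have S1 : ∑ i : Fin (n+1), |l i| = ∑ i ∈ Finset.range (n+1), |a i| := by
    rw [← Fin.sum_univ_eq_sum_range (fun i => |a i|) (n+1)]
    exact Finset.sum_congr rfl fun i _ => by rw [hal i]
  -- S2
  have S2 : (∑ i : Fin (n+1), if h : (i : ℕ) + 1 < n+1 then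
          (if l i * l ⟨(i : ℕ) + 1, h⟩ < 0 then min |l i| |l ⟨(i : ℕ) + 1, h⟩| else 0)
          else 0)
      = ∑ i ∈ Finset.range n, (if a i * a (i+1) < 0 then min |a i| |a (i+1)| else 0) := by
    have e1 : (∑ i : Fin (n+1), if h : (i : ℕ) + 1 < n+1 then
          (if l i * l ⟨(i : ℕ) + 1, h⟩ < 0 then min |l i| |l ⟨(i : ℕ) + 1, h⟩| else 0)
          else 0)
        = ∑ i ∈ Finset.range (n+1), (if i + 1 < n+1 then
            (if a i * a (i+1) < 0 then min |a i| |a (i+1)| else 0) else 0) := by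
      rw [← Fin.sum_univ_eq_sum_range (fun i => if i + 1 < n+1 then
            (if a i * a (i+1) < 0 then min |a i| |a (i+1)| else 0) else 0) (n+1)]
      refine Finset.sum_congr rfl fun i _ => ?_
      by_cases h : (i : ℕ) + 1 < n + 1
      · rw [dif_pos h, if_pos h]
        have h1 : a (i : ℕ) = l i := hal i
        have h2 : a ((i : ℕ)+1) = l ⟨(i:ℕ)+1, h⟩ := by rw [ha]; simp [aa, h]
        rw [h1, h2]
      · rw [dif_neg h, if_neg h]
    rw [e1, Finset.sum_range_succ, if_neg (by omega)]
    rw [add_zero]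
    exact Finset.sum_congr rfl fun i hi => by
      rw [if_pos (by simpa using Finset.mem_range.mp hi)]
  -- S3
  have S3 : ∑ j : Fin (n+2), |phi n l j|
      = |a 0| + (∑ i ∈ Finset.range n, |a i + a (i+1)| + |a n|) := by
    have e1 : ∑ j : Fin (n+2), |phi n l j| = ∑ j ∈ Finset.range (n+2), |bb n l j| := by
      rw [← Fin.sum_univ_eq_sum_range (fun j => |bb n l j|) (n+2)]
      exact rfl
    rw [e1, Finset.sum_range_succ', Finset.sum_range_succ]
    have h0 : bb n l 0 = a 0 := by simp [bb, ha]
    have hlast : bb n l (n+1) = a n := by simp [bb, ha]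
    have hmid : ∀ i ∈ Finset.range n, |bb n l (i+1)| = |a i + a (i+1)| := by
      intro i hi
      have hi' : i < n := Finset.mem_range.mp hi
      simp only [bb, if_neg (by omega : ¬ i+1 = 0), if_neg (by omega : ¬ i+1 = n+1),
        Nat.add_sub_cancel]
      rfl
    rw [h0, hlast, Finset.sum_congr rfl hmid]
    ring
  -- S4
  have S4a : ∑ i ∈ Finset.range n, |a i| = ∑ i ∈ Finset.range (n+1), |a i| - |a n| := by
    rw [Finset.sum_range_succ]; ring
  have S4b : ∑ i ∈ Finset.range n, |a (i+1)| = ∑ i ∈ Finset.range (n+1), |a i| - |a 0| := by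
    rw [Finset.sum_range_succ']; ring
  rw [S1, S2, S3]
  have ptsum : ∑ i ∈ Finset.range n, 2 * (if a i * a (i+1) < 0 then min |a i| |a (i+1)| else 0)
      = ∑ i ∈ Finset.range n, (|a i| + |a (i+1)| - |a i + a (i+1)|) :=
    Finset.sum_congr rfl fun i _ => by
      split_ifs with h
      · rcases mul_neg_iff.mp h with ⟨h1, h2⟩|⟨h1, h2⟩ <;>
          simp only [Int.abs_eq_natAbs] <;> omega
      · push_neg at h
        rcases mul_nonneg_iff.mp h with ⟨h1,h2⟩|⟨h1,h2⟩ <;>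
          simp only [Int.abs_eq_natAbs] <;> omega
  rw [Finset.mul_sum, ptsum]
  rw [Finset.sum_sub_distrib, Finset.sum_add_distrib, S4a, S4b]
  ring

lemma termBound (β : ℝ) (L n : ℕ) (l : Fin (n+1) → ℤ) :
    (if (∑ i, |l i|) + ((n+1 : ℕ) : ℤ) = (L : ℤ) then
        Real.exp (β * ((∑ i : Fin (n+1), if h : (i : ℕ) + 1 < n+1 then
          (if l i * l ⟨(i : ℕ) + 1, h⟩ < 0 then min |l i| |l ⟨(i : ℕ) + 1, h⟩| else 0)
          else 0 : ℤ) : ℝ))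
      else 0)
    ≤ Real.exp (β * ((L:ℝ) - (n+1))) * ∏ j : Fin (n+2), Real.exp (-β/2) ^ (phi n l j).natAbs := by
  split_ifs with hc
  · set H : ℤ := (∑ i : Fin (n+1), if h : (i : ℕ) + 1 < n+1 then
          (if l i * l ⟨(i : ℕ) + 1, h⟩ < 0 then min |l i| |l ⟨(i : ℕ) + 1, h⟩| else 0)
          else 0 : ℤ) with hH
    set S : ℤ := ∑ j : Fin (n+2), |phi n l j| with hS
    have hE : 2 * H = 2 * (∑ i : Fin (n+1), |l i|) - S := lemE n l
    have hsum : (∑ i : Fin (n+1), |l i|) = (L:ℤ) - (n+1) := by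
      have := hc; push_cast at this ⊢; linarith
    rw [hsum] at hE
    have hHr : (H:ℝ) = ((L:ℝ) - (n+1)) - (S:ℝ)/2 := by
      have := congrArg (fun z : ℤ => (z:ℝ)) hE
      push_cast at this
      linarith
    have hSr : (S:ℝ) = ∑ j : Fin (n+2), (((phi n l j).natAbs : ℕ) : ℝ) := by
      rw [hS, Int.cast_sum]
      exact Finset.sum_congr rfl fun j _ => by rw [Int.abs_eq_natAbs, Int.cast_natCast]
    have harg : β * (H:ℝ) = β * ((L:ℝ) - (n+1)) +
        ∑ j : Fin (n+2), (((phi n l j).natAbs : ℕ) : ℝ) * (-β/2) := by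
      rw [hHr]
      rw [← Finset.sum_mul, ← hSr]
      ring
    rw [harg, Real.exp_add, Real.exp_sum]
    refine le_of_eq ?_
    congr 1
    exact Finset.prod_congr rfl fun j _ => Real.exp_nat_mul _ _
  · positivity

noncomputable def term (β : ℝ) (L N : ℕ) (l : Fin N → ℤ) : ℝ :=
  if (∑ i, |l i|) + (N : ℤ) = (L : ℤ) then
    Real.exp (β * ((∑ i : Fin N, if h : (i : ℕ) + 1 < N then
      (if l i * l ⟨(i : ℕ) + 1, h⟩ < 0 then min |l i| |l ⟨(i : ℕ) + 1, h⟩| else 0)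
      else 0 : ℤ) : ℝ))
  else 0

lemma term_nonneg (β : ℝ) (L N : ℕ) (l : Fin N → ℤ) : 0 ≤ term β L N l := by
  rw [term]; positivity

lemma term_vanish (β : ℝ) (L N : ℕ) (hN : 1 ≤ N) :
    ∀ l : Fin N → ℤ, l ∉ Fintype.piFinset (fun _ : Fin N => Finset.Icc (-(L:ℤ)) L) →
      term β L N l = 0 := by
  intro l hl
  rw [term, if_neg]
  intro hc
  simp only [Fintype.mem_piFinset, Finset.mem_Icc, not_forall] at hl
  obtain ⟨i, hi⟩ := hl
  push_neg at hi
  have habs : (L:ℤ) < |l i| := by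
    rcases lt_or_ge (l i) (-(L:ℤ)) with h|h
    · have := neg_le_abs (l i); linarith
    · have := le_abs_self (l i); have := hi h; linarith
  have hle : |l i| ≤ ∑ j, |l j| :=
    Finset.single_le_sum (fun j _ => abs_nonneg (l j)) (Finset.mem_univ i)
  have hN' : (1:ℤ) ≤ (N:ℤ) := by exact_mod_cast hN
  linarith

lemma term_summable (β : ℝ) (L N : ℕ) (hN : 1 ≤ N) : Summable (term β L N) :=
  summable_of_ne_finset_zero (term_vanish β L N hN)

lemma sumInner (β : ℝ) (hq1 : Real.exp (-β/2) < 1) (L n : ℕ) :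
    ∑' l : Fin (n+1) → ℤ, term β L (n+1) l
      ≤ Real.exp (β * ((L:ℝ) - (n+1))) *
        ((1 + Real.exp (-β/2))/(1 - Real.exp (-β/2)))^(n+2) := by
  have hq0 : 0 ≤ Real.exp (-β/2) := (Real.exp_pos _).le
  rw [tsum_eq_sum (term_vanish β L (n+1) (by omega))]
  set s := Fintype.piFinset (fun _ : Fin (n+1) => Finset.Icc (-(L:ℤ)) L) with hs
  calc ∑ l ∈ s, term β L (n+1) l
      ≤ ∑ l ∈ s, Real.exp (β * ((L:ℝ) - (n+1))) *
          ∏ j : Fin (n+2), Real.exp (-β/2) ^ (phi n l j).natAbs := by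
        refine Finset.sum_le_sum fun l _ => ?_
        rw [term]
        exact termBound β L n l
    _ = Real.exp (β * ((L:ℝ) - (n+1))) *
          ∑ l ∈ s, ∏ j : Fin (n+2), Real.exp (-β/2) ^ (phi n l j).natAbs := by
        rw [Finset.mul_sum]
    _ ≤ Real.exp (β * ((L:ℝ) - (n+1))) *
        ((1 + Real.exp (-β/2))/(1 - Real.exp (-β/2)))^(n+2) := by
        refine mul_le_mul_of_nonneg_left ?_ (Real.exp_pos _).le
        have himg := Finset.sum_image (s := s) (g := phi n)
          (f := fun u : Fin (n+2) → ℤ => ∏ j, Real.exp (-β/2) ^ (u j).natAbs)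
          (fun x _ y _ h => phi_inj n h)
        refine le_trans (le_of_eq himg.symm) (lemC _ hq0 hq1 _ _)

lemma upperZ (β : ℝ) (hβ : 0 < β)
    (hΓ1 : (1 + Real.exp (-β/2))/(1 - Real.exp (-β/2)) * Real.exp (-β) ≤ 1) (L : ℕ) :
    ∑ N ∈ Finset.Icc 1 L, ∑' l : Fin N → ℤ, term β L N l
      ≤ L * ((1 + Real.exp (-β/2))/(1 - Real.exp (-β/2)) * Real.exp (β*L)) := by
  set q := Real.exp (-β/2) with hq
  have hq0 : 0 < q := Real.exp_pos _
  have hq1 : q < 1 := by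
    rw [hq, show (1:ℝ) = Real.exp 0 from (Real.exp_zero).symm]
    exact Real.exp_lt_exp.mpr (by linarith)
  set c := (1+q)/(1-q) with hc
  have hc0 : 0 ≤ c := div_nonneg (by linarith) (by linarith)
  have step : ∀ N ∈ Finset.Icc 1 L, (∑' l : Fin N → ℤ, term β L N l) ≤ c * Real.exp (β*L) := by
    intro N hN
    rw [Finset.mem_Icc] at hN
    obtain ⟨n, rfl⟩ := Nat.exists_eq_succ_of_ne_zero (show N ≠ 0 by omega)
    refine (sumInner β hq1 L n).trans ?_
    have e1 : Real.exp (β*((L:ℝ)-(n+1))) = Real.exp (β*L) * Real.exp (-β)^(n+1) := by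
      rw [← Real.exp_nat_mul, ← Real.exp_add]
      congr 1; push_cast; ring
    have key : Real.exp (β*((L:ℝ)-(n+1))) * c^(n+2)
        = (c * Real.exp (β*L)) * ((Real.exp (-β) * c)^(n+1)) := by
      rw [e1, mul_pow, pow_succ]
      ring
    rw [key]
    have hle1 : (Real.exp (-β) * c)^(n+1) ≤ 1 :=
      pow_le_one₀ (by positivity) (by rw [mul_comm]; exact hΓ1)
    calc (c * Real.exp (β*L)) * ((Real.exp (-β) * c)^(n+1))
        ≤ (c * Real.exp (β*L)) * 1 := mul_le_mul_of_nonneg_left hle1 (by positivity)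
      _ = c * Real.exp (β*L) := mul_one _
  refine (Finset.sum_le_sum step).trans ?_
  rw [Finset.sum_const, Nat.card_Icc]
  simp only [Nat.add_sub_cancel, nsmul_eq_mul]
  exact le_refl _

lemma constSum (N : ℕ) (hN : 1 ≤ N) (m : ℤ) :
    ∑ i : Fin N, (if (i:ℕ)+1 < N then m else 0) = ((N:ℤ) - 1) * m := by
  obtain ⟨n, rfl⟩ := Nat.exists_eq_succ_of_ne_zero (show N ≠ 0 by omega)
  rw [Fin.sum_univ_eq_sum_range (fun i => if i+1 < n+1 then m else 0) (n+1),
    Finset.sum_range_succ, if_neg (by omega), add_zero,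
    Finset.sum_congr rfl (fun i hi => if_pos (by simpa using Finset.mem_range.mp hi)),
    Finset.sum_const, Finset.card_range]
  push_cast; ring

lemma lowerZ (β : ℝ) (hβ : 0 ≤ β) (L : ℕ) (hL : 2 ≤ L) :
    Real.exp (β * (((L/(Nat.sqrt L+1) - 1) * Nat.sqrt L : ℕ) : ℝ))
      ≤ ∑ N ∈ Finset.Icc 1 L, ∑' l : Fin N → ℤ, term β L N l := by
  set m := Nat.sqrt L with hm
  have hm1 : 1 ≤ m := by
    rw [hm]; exact Nat.sqrt_pos.mpr (by omega)
  have hmL : m + 1 ≤ L := Nat.sqrt_lt_self (by omega)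
  set N := L / (m+1) with hN
  have hN1 : 1 ≤ N := (Nat.one_le_div_iff (by omega)).mpr hmL
  have hNleL : N ≤ L := Nat.div_le_self _ _
  set r := L % (m+1) with hr
  have hrm : r < m + 1 := Nat.mod_lt _ (by omega)
  have hLr : (m+1) * N + r = L := Nat.div_add_mod L (m+1)
  set l : Fin N → ℤ := fun i =>
    (if Even (i:ℕ) then 1 else -1) * ((m:ℤ) + if (i:ℕ) = 0 then (r:ℤ) else 0) with hl
  have hpos : ∀ i : Fin N, (0:ℤ) < (m:ℤ) + if (i:ℕ) = 0 then (r:ℤ) else 0 := by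
    intro i
    have : (1:ℤ) ≤ (m:ℤ) := by exact_mod_cast hm1
    split_ifs with h
    · have : (0:ℤ) ≤ (r:ℤ) := Int.natCast_nonneg r
      linarith
    · linarith
  have habs : ∀ i : Fin N, |l i| = (m:ℤ) + if (i:ℕ) = 0 then (r:ℤ) else 0 := by
    intro i
    rw [hl]
    simp only []
    rw [abs_mul]
    have h1 : |(if Even (i:ℕ) then (1:ℤ) else -1)| = 1 := by split_ifs <;> simp
    rw [h1, one_mul, abs_of_pos (hpos i)]
  -- the constraint holds
  have hconstraint : (∑ i, |l i|) + (N : ℤ) = (L : ℤ) := by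
    have e1 : ∑ i : Fin N, |l i| = (N:ℤ)*(m:ℤ) + (r:ℤ) := by
      rw [Finset.sum_congr rfl (fun i _ => habs i), Finset.sum_add_distrib,
        Finset.sum_const, Finset.card_univ, Fintype.card_fin, nsmul_eq_mul]
      congr 1
      rw [Finset.sum_eq_single (⟨0, by omega⟩ : Fin N)]
      · simp
      · intro b _ hb
        rw [if_neg]
        intro hb0
        exact hb (Fin.ext hb0)
      · intro h; exact absurd (Finset.mem_univ _) h
    rw [e1]
    have := hLr
    push_cast [← this]
    ring
  -- the energy is at least (N-1)*m
  have hmin : ∀ (i : Fin N) (h : (i:ℕ)+1 < N),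
      (if (i:ℕ)+1 < N then (m:ℤ) else 0)
        ≤ (if l i * l ⟨(i:ℕ)+1, h⟩ < 0 then min |l i| |l ⟨(i:ℕ)+1, h⟩| else 0) := by
    intro i h
    rw [if_pos h, if_pos]
    · refine le_min ?_ ?_
      · rw [habs i]; split_ifs with h0
        · have : (0:ℤ) ≤ (r:ℤ) := Int.natCast_nonneg r; linarith
        · linarith
      · rw [habs ⟨(i:ℕ)+1, h⟩]
        simp
    · -- sign is negative
      have hsign : (if Even (i:ℕ) then (1:ℤ) else -1) *
          (if Even ((i:ℕ)+1) then (1:ℤ) else -1) = -1 := by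
        by_cases he : Even (i:ℕ)
        · rw [if_pos he, if_neg (by simpa [Nat.even_add_one] using he)]
          ring
        · rw [if_neg he, if_pos (Nat.even_add_one.mpr he)]
          ring
      have hp1 := hpos i
      have hp2' : (0:ℤ) < (m:ℤ) + if (i:ℕ)+1 = 0 then (r:ℤ) else 0 := hpos ⟨(i:ℕ)+1, h⟩
      rw [hl]
      show (if Even (i:ℕ) then (1:ℤ) else -1) * ((m:ℤ) + if (i:ℕ) = 0 then (r:ℤ) else 0) *
          ((if Even ((i:ℕ)+1) then (1:ℤ) else -1) *
            ((m:ℤ) + if (i:ℕ)+1 = 0 then (r:ℤ) else 0)) < 0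
      nlinarith [hsign, mul_pos hp1 hp2', hp1, hp2']
  have hH : ((N:ℤ) - 1) * (m:ℤ) ≤ (∑ i : Fin N, if h : (i : ℕ) + 1 < N then
      (if l i * l ⟨(i : ℕ) + 1, h⟩ < 0 then min |l i| |l ⟨(i : ℕ) + 1, h⟩| else 0)
      else 0 : ℤ) := by
    rw [← constSum N hN1 (m:ℤ)]
    refine Finset.sum_le_sum fun i _ => ?_
    by_cases h : (i:ℕ)+1 < N
    · rw [dif_pos h]; exact hmin i h
    · rw [dif_neg h, if_neg h]
  -- conclude
  have hterm : Real.exp (β * (((N - 1) * m : ℕ) : ℝ)) ≤ term β L N l := by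
    rw [term, if_pos hconstraint]
    refine Real.exp_le_exp.mpr (mul_le_mul_of_nonneg_left ?_ hβ)
    have hcast : (((N - 1) * m : ℕ) : ℤ) = ((N:ℤ) - 1) * (m:ℤ) := by
      push_cast [Nat.cast_sub hN1]; ring
    calc (((N - 1) * m : ℕ) : ℝ) = (((((N - 1) * m : ℕ) : ℤ)) : ℝ) := by push_cast; ring
      _ ≤ _ := by exact_mod_cast (hcast ▸ hH)
  refine hterm.trans ?_
  have h1 : term β L N l ≤ ∑' l' : Fin N → ℤ, term β L N l' :=
    Summable.le_tsum (term_summable β L N hN1) l (fun b _ => term_nonneg β L N b)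
  refine h1.trans ?_
  exact Finset.single_le_sum (f := fun N => ∑' l' : Fin N → ℤ, term β L N l')
    (fun M _ => tsum_nonneg (fun b => term_nonneg β L M b))
    (Finset.mem_Icc.mpr ⟨hN1, hNleL⟩)

/-- For `β ≥ β_c`, where `β_c` is the unique solution of `Γ_β = 1` with
`Γ_β = (1+e^{-β/2})/((1-e^{-β/2}) e^β)`, the free energy of IPDSAW satisfies
`f(β) = β`, i.e. the excess free energy `f(β) - β` vanishes. -/
theorem excess_free_energy_zero_in_collapsed_phase
    (Γ : ℝ → ℝ)
    (hΓ : ∀ b : ℝ, Γ b = (1 + Real.exp (-b / 2)) / ((1 - Real.exp (-b / 2))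
      * Real.exp b))
    (βc : ℝ) (hβc : 0 < βc) (hβc1 : Γ βc = 1)
    (β : ℝ) (hβ : βc ≤ β)
    (Z : ℕ → ℝ)
    (hZ : ∀ L : ℕ, Z L = ∑ N ∈ Finset.Icc 1 L, ∑' l : Fin N → ℤ,
      if (∑ i, |l i|) + (N : ℤ) = (L : ℤ) then
        Real.exp (β * ((∑ i : Fin N, if h : (i : ℕ) + 1 < N then
          (if l i * l ⟨(i : ℕ) + 1, h⟩ < 0 then min |l i| |l ⟨(i : ℕ) + 1, h⟩| else 0)
          else 0 : ℤ) : ℝ))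
      else 0)
    (f : ℝ) (hf : Tendsto (fun L : ℕ => Real.log (Z L) / L) atTop (𝓝 f)) :
    f = β := by
  have hβ0 : 0 < β := lt_of_lt_of_le hβc hβ
  have hZterm : ∀ L : ℕ, Z L = ∑ N ∈ Finset.Icc 1 L, ∑' l : Fin N → ℤ, term β L N l :=
    fun L => (hZ L).trans rfl
  set q := Real.exp (-β/2) with hq
  have hq0 : 0 < q := Real.exp_pos _
  have hq1 : q < 1 := by
    rw [hq, show (1:ℝ) = Real.exp 0 from (Real.exp_zero).symm]
    exact Real.exp_lt_exp.mpr (by linarith)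
  set c := (1+q)/(1-q) with hc
  have hc1 : 1 ≤ c := by
    rw [hc, le_div_iff₀ (by linarith)]; linarith
  have hcpos : 0 < c := lt_of_lt_of_le one_pos hc1
  -- Γ_β ≤ 1
  have hA : 1 + q ≤ (1 - q) * Real.exp β := by
    have h1' : (1 + Real.exp (-βc/2)) / ((1 - Real.exp (-βc/2)) * Real.exp βc) = 1 :=
      (hΓ βc).symm.trans hβc1
    have := lemA βc β hβc hβ h1'
    rw [hq]; exact this
  have hΓ1 : c * Real.exp (-β) ≤ 1 := by
    rw [hc, div_mul_eq_mul_div, div_le_one (by linarith)]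
    have hee : Real.exp β * Real.exp (-β) = 1 := by
      rw [← Real.exp_add]; simp
    nlinarith [mul_le_mul_of_nonneg_right hA (Real.exp_pos (-β)).le, hee]
  -- lower asymptotics
  have hsq : Tendsto (fun L : ℕ => Nat.sqrt L) atTop atTop := by
    refine Filter.tendsto_atTop.mpr fun b => Filter.eventually_atTop.mpr ⟨b*b, fun L hL => ?_⟩
    calc b = Nat.sqrt (b*b) := (Nat.sqrt_eq b).symm
      _ ≤ Nat.sqrt L := Nat.sqrt_le_sqrt hL
  have hg : Tendsto (fun k : ℕ => (k:ℝ)/(k+1) - 2/k) atTop (𝓝 1) := by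
    have h1 : Tendsto (fun k : ℕ => 1 - 1/((k:ℝ)+1) - 2/k) atTop (𝓝 (1 - 0 - 0)) :=
      (tendsto_const_nhds.sub tendsto_one_div_add_atTop_nhds_zero_nat).sub
        (tendsto_const_div_atTop_nhds_zero_nat 2)
    rw [show (1:ℝ) - 0 - 0 = 1 by ring] at h1
    refine h1.congr fun k => ?_
    have hk : ((k:ℝ)+1) ≠ 0 := by positivity
    rw [sub_left_inj, one_sub_div hk]; ring
  have hlowT : Tendsto (fun L : ℕ =>
      β * ((Nat.sqrt L : ℝ)/((Nat.sqrt L : ℝ)+1) - 2/(Nat.sqrt L : ℝ))) atTop (𝓝 β) := by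
    have := (hg.comp hsq).const_mul β
    simpa [Function.comp, mul_one] using this
  -- upper asymptotics
  have hupT : Tendsto (fun L : ℕ => (Real.log L + Real.log c)/L + β) atTop (𝓝 β) := by
    have h1 : Tendsto (fun L : ℕ => Real.log L / L) atTop (𝓝 0) := by
      have := Real.isLittleO_log_id_atTop.tendsto_div_nhds_zero.comp
        (tendsto_natCast_atTop_atTop (R := ℝ))
      simpa [Function.comp_def] using this
    have h2 : Tendsto (fun L : ℕ => Real.log c / L) atTop (𝓝 0) :=
      tendsto_const_div_atTop_nhds_zero_nat _
    have h3 := (h1.add h2).add_const β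
    rw [show (0:ℝ) + 0 + β = β by ring] at h3
    refine h3.congr fun L => ?_
    rw [add_div]
  -- eventual lower bound
  have evlow : ∀ᶠ L : ℕ in atTop,
      β * ((Nat.sqrt L : ℝ)/((Nat.sqrt L : ℝ)+1) - 2/(Nat.sqrt L : ℝ))
        ≤ Real.log (Z L) / L := by
    refine Filter.eventually_atTop.mpr ⟨2, fun L hL => ?_⟩
    set m := Nat.sqrt L with hm
    have hm1 : 1 ≤ m := Nat.sqrt_pos.mpr (by omega)
    have hmL : m + 1 ≤ L := Nat.sqrt_lt_self (by omega)
    set N := L / (m+1) with hN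
    have hN1 : 1 ≤ N := (Nat.one_le_div_iff (by omega)).mpr hmL
    set r := L % (m+1) with hr
    have hrm : r < m + 1 := Nat.mod_lt _ (by omega)
    have hLr : (m+1) * N + r = L := Nat.div_add_mod L (m+1)
    have hZlow : Real.exp (β * (((N - 1) * m : ℕ) : ℝ)) ≤ Z L := by
      rw [hZterm L]; exact lowerZ β hβ0.le L hL
    have hlog : β * (((N - 1) * m : ℕ) : ℝ) ≤ Real.log (Z L) := by
      calc β * (((N - 1) * m : ℕ) : ℝ)
          = Real.log (Real.exp (β * (((N - 1) * m : ℕ) : ℝ))) := (Real.log_exp _).symm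
        _ ≤ Real.log (Z L) := Real.log_le_log (Real.exp_pos _) hZlow
    have hL0 : (0:ℝ) < (L:ℝ) := by exact_mod_cast (show 0 < L by omega)
    have hdiv : β * (((N - 1) * m : ℕ) : ℝ) / L ≤ Real.log (Z L) / L :=
      div_le_div_of_nonneg_right hlog hL0.le
    refine le_trans ?_ hdiv
    have hcast : (((N - 1) * m : ℕ) : ℝ) = ((N:ℝ) - 1) * (m:ℝ) := by
      push_cast [Nat.cast_sub hN1]; ring
    rw [mul_div_assoc]
    refine mul_le_mul_of_nonneg_left ?_ hβ0.le
    rw [hcast, le_div_iff₀ hL0]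
    have hmr : (1:ℝ) ≤ (m:ℝ) := by exact_mod_cast hm1
    have hm2 : (m:ℝ)*(m:ℝ) ≤ L := by
      have h' : m*m ≤ L := by simpa [hm, pow_two] using Nat.sqrt_le' L
      exact_mod_cast h'
    have hLreq : ((m:ℝ)+1) * (N:ℝ) + (r:ℝ) = (L:ℝ) := by exact_mod_cast hLr
    have hrle : (r:ℝ) ≤ (m:ℝ) := by exact_mod_cast (show r ≤ m by omega)
    have hNr : (1:ℝ) ≤ (N:ℝ) := by exact_mod_cast hN1
    have h1 : (m:ℝ)/((m:ℝ)+1)*L ≤ (m:ℝ)*N + m := by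
      rw [div_mul_eq_mul_div, div_le_iff₀ (by linarith)]
      nlinarith [mul_le_mul_of_nonneg_left hrle (by linarith : (0:ℝ) ≤ (m:ℝ))]
    have h2 : 2*(m:ℝ) ≤ 2/(m:ℝ)*L := by
      rw [div_mul_eq_mul_div, le_div_iff₀ (by linarith)]
      nlinarith [hm2]
    rw [sub_mul]
    linarith [h1, h2]
  -- eventual upper bound
  have evup : ∀ᶠ L : ℕ in atTop,
      Real.log (Z L)/L ≤ (Real.log L + Real.log c)/L + β := by
    refine Filter.eventually_atTop.mpr ⟨2, fun L hL => ?_⟩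
    have hL0 : (0:ℝ) < (L:ℝ) := by exact_mod_cast (show 0 < L by omega)
    have hZpos : 0 < Z L := lt_of_lt_of_le (Real.exp_pos _)
      (by rw [hZterm L]; exact lowerZ β hβ0.le L hL)
    have hupper : Z L ≤ L * (c * Real.exp (β*L)) := by
      rw [hZterm L]; exact upperZ β hβ0 hΓ1 L
    have hlog2 : Real.log (Z L) ≤ Real.log L + Real.log c + β * L := by
      have h := Real.log_le_log hZpos hupper
      rwa [Real.log_mul (by positivity) (by positivity),
        Real.log_mul (by positivity) (Real.exp_ne_zero _), Real.log_exp, ← add_assoc] at h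
    calc Real.log (Z L)/L ≤ (Real.log L + Real.log c + β*L)/L :=
          div_le_div_of_nonneg_right hlog2 hL0.le
      _ = (Real.log L + Real.log c)/L + β := by
          rw [add_div, mul_div_assoc, div_self (ne_of_gt hL0), mul_one]
  -- squeeze
  have hmid : Tendsto (fun L : ℕ => Real.log (Z L)/L) atTop (𝓝 β) :=
    tendsto_of_tendsto_of_tendsto_of_le_of_le' hlowT hupT evlow evup
  exact tendsto_nhds_unique hf hmid
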